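/- Let B be an ordered branching program of length n and width w, and let H : {0,1}^s → {0,1}^n be an ε-hitting set generator for the class of all ordered branching programs of length n and width at most w+1. Then Pr_{x←U_n}[ the path v_st = B[v_st, x_{1..0}], B[v_st, x_{1..1}], ..., B[v_st, x_{1..n}] visits an unverified state ] < 2ε. -/

import Mathlib

open Finset
open scoped Classical

/-- An ordered branching program of length `n` and width `w`: each layer's states
are identified with `Fin w`; `next i v b` is the successor of state `v` in layer `i`
on bit `b`; states in the last layer are labeled by `label`. -/
structure OBP (n w : ℕ) where
  start : Fin w
  next : ℕ → Fin w → Bool → Fin w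
  label : Fin w → Bool

namespace OBP

/-- The state reached from state `v` in layer `i` after reading `k` bits. -/
def walk {n w : ℕ} (B : OBP n w) : (k : ℕ) → (i : ℕ) → Fin w → (Fin k → Bool) → Fin w
  | 0, _, v, _ => v
  | k + 1, i, v, x => walk B k (i + 1) (B.next i v (x 0)) (fun j => x j.succ)

/-- The state in layer `i` reached from the start state on a length-`i` input. -/
def reach {n w : ℕ} (B : OBP n w) {i : ℕ} (x : Fin i → Bool) : Fin w :=
  B.walk i 0 B.start x

/-- The boolean output of the program on an `n`-bit input. -/
def eval {n w : ℕ} (B : OBP n w) (x : Fin n → Bool) : Bool :=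
  B.label (B.reach x)

end OBP

/-- Expectation of a real-valued function under the uniform distribution. -/
noncomputable def Exp {α : Type*} [Fintype α] (f : α → ℝ) : ℝ :=
  (∑ a, f a) / (Fintype.card α : ℝ)

/-- Probability of an event under the uniform distribution. -/
noncomputable def prob {α : Type*} [Fintype α] (p : α → Prop) : ℝ :=
  ((Finset.univ.filter p).card : ℝ) / (Fintype.card α : ℝ)

/-- A boolean viewed as a real number. -/
def bval (b : Bool) : ℝ := if b then 1 else 0

/-- The first `k` bits of `x` (padded with `false` if `k > n`). -/
def bits {n : ℕ} (x : Fin n → Bool) (k : ℕ) : Fin k → Bool :=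
  fun j => if h : (j : ℕ) < n then x ⟨j, h⟩ else false

/-- `p_{v→}`: the probability of acceptance starting from state `v` in layer `i`,
over a uniformly random suffix of length `n - i`. -/
noncomputable def pAcc {n w : ℕ} (B : OBP n w) (i : ℕ) (v : Fin w) : ℝ :=
  prob (fun r : Fin (n - i) → Bool => B.label (B.walk (n - i) i v r) = true)

/-- `H` is an `ε`-hitting set generator for all OBPs of length `n` and width `W`. -/
noncomputable def IsHSG (n W s : ℕ) (H : (Fin s → Bool) → Fin n → Bool) (ε : ℝ) : Prop :=
  ∀ B' : OBP n W, ε ≤ Exp (fun x : Fin n → Bool => bval (B'.eval x)) →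
    ∃ y : Fin s → Bool, B'.eval (H y) = true

/-- States `u` and `u'` in layer `i` are indistinguishable under `H`:
they behave identically on the length-`(n-i)` prefix of every output of `H`. -/
def Indist {n w s : ℕ} (B : OBP n w) (H : (Fin s → Bool) → Fin n → Bool)
    (i : ℕ) (u u' : Fin w) : Prop :=
  ∀ y : Fin s → Bool,
    B.walk (n - i) i u (bits (H y) (n - i)) = B.walk (n - i) i u' (bits (H y) (n - i))

/-- `v_i(x)`: the state in layer `i` reached from the start
on the length-`i` prefix of `H x`. -/
def vAt {n w s : ℕ} (B : OBP n w) (H : (Fin s → Bool) → Fin n → Bool)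
    (i : ℕ) (x : Fin s → Bool) : Fin w :=
  B.reach (bits (H x) i)

/-- A state `v` in layer `i < n` is unverified if one of its successors is not
reached (in layer `i+1`) by any output of `H`. -/
def Unverified {n w s : ℕ} (B : OBP n w) (H : (Fin s → Bool) → Fin n → Bool)
    (i : ℕ) (v : Fin w) : Prop :=
  i < n ∧ ∃ b : Bool, ∀ x' : Fin s → Bool, B.next i v b ≠ vAt B H (i + 1) x'


section Aux

variable {n w s : ℕ}

lemma walk_succ_last (B : OBP n w) (k : ℕ) :
    ∀ (i : ℕ) (v : Fin w) (x : Fin (k + 1) → Bool),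
      B.walk (k + 1) i v x
        = B.next (i + k) (B.walk k i v (fun j => x j.castSucc)) (x (Fin.last k)) := by
  induction k with
  | zero =>
    intro i v x
    simp [OBP.walk, Fin.last]
  | succ k ih =>
    intro i v x
    have h1 : B.walk (k + 2) i v x
        = B.walk (k + 1) (i + 1) (B.next i v (x 0)) (fun j => x j.succ) := rfl
    rw [h1, ih]
    have h2 : B.walk (k + 1) i v (fun j => x j.castSucc)
        = B.walk k (i + 1) (B.next i v (x 0)) (fun j => x j.castSucc.succ) := by
      show _ = B.walk k (i+1) (B.next i v ((fun j : Fin (k+1) => x j.castSucc) 0))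
        (fun j => (fun j' : Fin (k+1) => x j'.castSucc) j.succ)
      rfl
    rw [h2]
    have h3 : i + 1 + k = i + (k + 1) := by omega
    rw [h3]
    rfl

lemma bits_castSucc (x : Fin n → Bool) (i : ℕ) (j : Fin i) :
    bits x (i + 1) j.castSucc = bits x i j := by
  simp [bits]

lemma bits_last (x : Fin n → Bool) (i : ℕ) (h : i < n) :
    bits x (i + 1) (Fin.last i) = x ⟨i, h⟩ := by
  simp [bits, Fin.last, h]

lemma reach_succ (B : OBP n w) (x : Fin n → Bool) {i : ℕ} (h : i < n) :
    B.reach (bits x (i + 1)) = B.next i (B.reach (bits x i)) (x ⟨i, h⟩) := by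
  unfold OBP.reach
  rw [walk_succ_last]
  rw [Nat.zero_add, bits_last x i h]
  congr 1

lemma bits_self (x : Fin n → Bool) : bits x n = x := by
  funext j
  simp [bits]

end Aux

section Bprime

variable {n w s : ℕ}

/-- A bad bit out of an unverified state (arbitrary otherwise). -/
noncomputable def badbit (B : OBP n w) (H : (Fin s → Bool) → Fin n → Bool)
    (i : ℕ) (v : Fin w) : Bool :=
  if h : ∃ b : Bool, ∀ x' : Fin s → Bool, B.next i v b ≠ vAt B H (i + 1) x' then
    h.choose else false

lemma badbit_spec {B : OBP n w} {H : (Fin s → Bool) → Fin n → Bool} {i : ℕ} {v : Fin w}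
    (hu : Unverified B H i v) :
    ∀ x' : Fin s → Bool, B.next i v (badbit B H i v) ≠ vAt B H (i + 1) x' := by
  unfold badbit
  rw [dif_pos hu.2]
  exact hu.2.choose_spec

/-- The auxiliary width `w+1` program: simulates `B`, but jumps to an absorbing
accepting sink when a bad edge out of an unverified state is taken. -/
noncomputable def Bp (B : OBP n w) (H : (Fin s → Bool) → Fin n → Bool) : OBP n (w + 1) where
  start := B.start.castSucc
  next := fun i v b =>
    Fin.lastCases (Fin.last w)
      (fun u => if Unverified B H i u ∧ b = badbit B H i u then Fin.last w
                else (B.next i u b).castSucc) v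
  label := fun v => decide (v = Fin.last w)

lemma Bp_next_last (B : OBP n w) (H : (Fin s → Bool) → Fin n → Bool) (i : ℕ) (b : Bool) :
    (Bp B H).next i (Fin.last w) b = Fin.last w := by
  simp [Bp]

lemma Bp_next_castSucc (B : OBP n w) (H : (Fin s → Bool) → Fin n → Bool) (i : ℕ)
    (u : Fin w) (b : Bool) :
    (Bp B H).next i u.castSucc b
      = if Unverified B H i u ∧ b = badbit B H i u then Fin.last w
        else (B.next i u b).castSucc := by
  simp [Bp]

/-- `Bp` never accepts an output of `H`. -/
lemma Bp_reach_H (B : OBP n w) (H : (Fin s → Bool) → Fin n → Bool) (y : Fin s → Bool) :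
    ∀ i, i ≤ n → (Bp B H).reach (bits (H y) i) = (vAt B H i y).castSucc := by
  intro i
  induction i with
  | zero => intro _; rfl
  | succ i ih =>
    intro hi
    have h : i < n := by omega
    rw [reach_succ (Bp B H) (H y) h, ih (by omega), Bp_next_castSucc]
    have hv : vAt B H (i + 1) y = B.next i (vAt B H i y) (H y ⟨i, h⟩) :=
      reach_succ B (H y) h
    rw [if_neg, ← hv]
    rintro ⟨hu, hb⟩
    exact badbit_spec hu y (by rw [← hb, ← hv])

lemma Bp_eval_H (B : OBP n w) (H : (Fin s → Bool) → Fin n → Bool) (y : Fin s → Bool) :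
    (Bp B H).eval (H y) = false := by
  unfold OBP.eval
  rw [← bits_self (H y), Bp_reach_H B H y n le_rfl]
  simp [Bp]

end Bprime

section Accept

variable {n w s : ℕ}

lemma Bp_sink_stays (B : OBP n w) (H : (Fin s → Bool) → Fin n → Bool) (z : Fin n → Bool)
    {j : ℕ} (hj : j ≤ n) (hs : (Bp B H).reach (bits z j) = Fin.last w) :
    (Bp B H).reach (bits z n) = Fin.last w := by
  have : ∀ m, j ≤ m → m ≤ n → (Bp B H).reach (bits z m) = Fin.last w := by
    intro m
    induction m with
    | zero =>
      intro h1 _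
      have : j = 0 := by omega
      rw [← this]; exact hs
    | succ m ih =>
      intro h1 h2
      rcases Nat.lt_or_ge j (m+1) with hlt | hge
      · have hm : m < n := by omega
        rw [reach_succ (Bp B H) z hm, ih (by omega) (by omega), Bp_next_last]
      · have : j = m + 1 := by omega
        rw [← this]; exact hs
  exact this n hj le_rfl

lemma Bp_tracks (B : OBP n w) (H : (Fin s → Bool) → Fin n → Bool) (z : Fin n → Bool) :
    ∀ j, j ≤ n → (Bp B H).reach (bits z j) = Fin.last w ∨
      (Bp B H).reach (bits z j) = (B.reach (bits z j)).castSucc := by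
  intro j
  induction j with
  | zero => intro _; right; rfl
  | succ j ih =>
    intro hj
    have h : j < n := by omega
    rcases ih (by omega) with hc | hc
    · left; rw [reach_succ (Bp B H) z h, hc, Bp_next_last]
    · rw [reach_succ (Bp B H) z h, hc, Bp_next_castSucc]
      by_cases hcond : Unverified B H j (B.reach (bits z j)) ∧
          z ⟨j, h⟩ = badbit B H j (B.reach (bits z j))
      · left; rw [if_pos hcond]
      · right; rw [if_neg hcond, reach_succ B z h]

lemma Bp_accepts (B : OBP n w) (H : (Fin s → Bool) → Fin n → Bool) (z : Fin n → Bool)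
    {i : ℕ} (h : i < n) (hu : Unverified B H i (B.reach (bits z i)))
    (hb : z ⟨i, h⟩ = badbit B H i (B.reach (bits z i))) :
    (Bp B H).eval z = true := by
  have hsink : (Bp B H).reach (bits z n) = Fin.last w := by
    rcases Bp_tracks B H z i (le_of_lt h) with hc | hc
    · exact Bp_sink_stays B H z (le_of_lt h) hc
    · apply Bp_sink_stays B H z (show i + 1 ≤ n by omega)
      rw [reach_succ (Bp B H) z h, hc, Bp_next_castSucc, if_pos ⟨hu, hb⟩]
  unfold OBP.eval
  rw [← bits_self z, hsink]
  simp [Bp]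

end Accept

section Count

variable {n w s : ℕ}

lemma bits_update_of_le (x : Fin n → Bool) (k : Fin n) (b : Bool) {j : ℕ} (hj : j ≤ k.val) :
    bits (Function.update x k b) j = bits x j := by
  funext m
  simp only [bits]
  split
  · next h =>
      rw [Function.update_of_ne]
      apply Fin.ne_of_val_ne
      simp only [Fin.val_mk]
      have := m.isLt; omega
  · rfl

lemma Exp_bval (g : (Fin n → Bool) → Bool) :
    Exp (fun x => bval (g x)) = prob (fun x => g x = true) := by
  unfold Exp prob bval
  congr 1
  rw [Finset.sum_boole]
  exact congrArg _ (congrArg _ (by convert rfl))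

end Count

section Main

variable {n w s : ℕ}

lemma find_stable (B : OBP n w) (H : (Fin s → Bool) → Fin n → Bool)
    (x z : Fin n → Bool) (hx : ∃ i, Unverified B H i (B.reach (bits x i)))
    (hagree : ∀ j, j ≤ Nat.find hx → bits z j = bits x j) :
    ∃ hz : ∃ i, Unverified B H i (B.reach (bits z i)), Nat.find hz = Nat.find hx := by
  have hPz : Unverified B H (Nat.find hx) (B.reach (bits z (Nat.find hx))) := by
    rw [hagree _ le_rfl]; exact Nat.find_spec hx
  refine ⟨⟨_, hPz⟩, le_antisymm (Nat.find_le hPz) ?_⟩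
  rw [Nat.le_find_iff]
  intro m hm hPzm
  rw [hagree m (le_of_lt hm)] at hPzm
  exact Nat.find_min hx hm hPzm

theorem stmt14 {n w s : ℕ} (B : OBP n w) (ε : ℝ)
    (H : (Fin s → Bool) → Fin n → Bool) (hH : IsHSG n (w + 1) s H ε) :
    prob (fun x : Fin n → Bool =>
      ∃ i : ℕ, Unverified B H i (B.reach (bits x i))) < 2 * ε := by
  classical
  -- the expectation of the auxiliary program is `< ε`
  have hExp : Exp (fun x : Fin n → Bool => bval ((Bp B H).eval x)) < ε := by
    by_contra hc
    obtain ⟨y, hy⟩ := hH (Bp B H) (le_of_not_gt hc)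
    rw [Bp_eval_H] at hy
    exact Bool.false_ne_true hy
  set Q : (Fin n → Bool) → Prop :=
    fun x => ∃ i : ℕ, Unverified B H i (B.reach (bits x i)) with hQ
  set S : Finset (Fin n → Bool) := Finset.univ.filter Q with hS
  set T : Finset (Fin n → Bool) :=
    Finset.univ.filter (fun x => (Bp B H).eval x = true) with hT
  -- the redirecting map
  set f : (Fin n → Bool) → (Fin n → Bool) := fun x =>
    if hx : Q x then
      Function.update x ⟨Nat.find hx, (Nat.find_spec hx).1⟩
        (badbit B H (Nat.find hx) (B.reach (bits x (Nat.find hx))))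
    else x with hf
  have hmaps : ∀ x ∈ S, f x ∈ T := by
    intro x hxS
    have hx : Q x := (Finset.mem_filter.1 hxS).2
    have hlt : Nat.find hx < n := (Nat.find_spec hx).1
    have hfx : f x = Function.update x ⟨Nat.find hx, hlt⟩
        (badbit B H (Nat.find hx) (B.reach (bits x (Nat.find hx)))) := by
      rw [hf]; simp only [dif_pos hx]
    have hbits : bits (f x) (Nat.find hx) = bits x (Nat.find hx) := by
      rw [hfx]; exact bits_update_of_le _ _ _ le_rfl
    refine Finset.mem_filter.2 ⟨Finset.mem_univ _, ?_⟩
    refine Bp_accepts B H (f x) hlt ?_ ?_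
    · rw [hbits]; exact Nat.find_spec hx
    · rw [hbits, hfx]; simp
  have hfiber : ∀ z ∈ T, (S.filter (fun x => f x = z)).card ≤ 2 := by
    intro z hzT
    by_cases hne : (S.filter (fun x => f x = z)).Nonempty
    · obtain ⟨x₀, hx₀⟩ := hne
      have hx₀S : x₀ ∈ S := (Finset.mem_filter.1 hx₀).1
      have hx₀f : f x₀ = z := (Finset.mem_filter.1 hx₀).2
      have hx₀Q : Q x₀ := (Finset.mem_filter.1 hx₀S).2
      have hagree₀ : ∀ j, j ≤ Nat.find hx₀Q → bits z j = bits x₀ j := by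
        intro j hj
        rw [← hx₀f, hf]; simp only [dif_pos hx₀Q]
        exact bits_update_of_le _ _ _ hj
      obtain ⟨hzQ, hzfind⟩ := find_stable B H x₀ z hx₀Q hagree₀
      set k : Fin n := ⟨Nat.find hzQ, (Nat.find_spec hzQ).1⟩ with hk
      -- every fiber element is `z` updated at position `k`
      have hdet : ∀ x ∈ S.filter (fun x => f x = z),
          x = Function.update z k (x k) := by
        intro x hxmem
        have hxS : x ∈ S := (Finset.mem_filter.1 hxmem).1
        have hxf : f x = z := (Finset.mem_filter.1 hxmem).2
        have hxQ : Q x := (Finset.mem_filter.1 hxS).2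
        have hagree : ∀ j, j ≤ Nat.find hxQ → bits z j = bits x j := by
          intro j hj
          rw [← hxf, hf]; simp only [dif_pos hxQ]
          exact bits_update_of_le _ _ _ hj
        obtain ⟨hzQ', hzfind'⟩ := find_stable B H x z hxQ hagree
        have hQeq : Nat.find hzQ = Nat.find hzQ' :=
          congrArg _ (Subsingleton.elim hzQ hzQ')
        have hkeq : (⟨Nat.find hxQ, (Nat.find_spec hxQ).1⟩ : Fin n) = k := by
          rw [hk]
          exact Fin.mk_eq_mk.mpr (hQeq.trans hzfind').symm
        have hzne : ∀ m, m ≠ k → z m = x m := by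
          intro m hm
          rw [← hxf, hf]; simp only [dif_pos hxQ]
          exact Function.update_of_ne (fun he => hm (he.trans hkeq)) _ _
        funext m
        by_cases hm : m = k
        · rw [hm, Function.update_self]
        · rw [Function.update_of_ne hm, hzne m hm]
      have hsub : S.filter (fun x => f x = z) ⊆
          {Function.update z k false, Function.update z k true} := by
        intro x hxmem
        have hx := hdet x hxmem
        rcases Bool.dichotomy (x k) with hb | hb
        · exact Finset.mem_insert.2 (Or.inl (hx.trans (by rw [hb])))
        · exact Finset.mem_insert.2 (Or.inr (Finset.mem_singleton.2
            (hx.trans (by rw [hb]))))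
      calc (S.filter (fun x => f x = z)).card
          ≤ ({Function.update z k false, Function.update z k true} :
              Finset (Fin n → Bool)).card := Finset.card_le_card hsub
        _ ≤ 2 := by
            apply le_trans (Finset.card_insert_le _ _)
            simp
    · rw [Finset.not_nonempty_iff_eq_empty] at hne
      rw [hne]; simp
  have hcard : S.card ≤ 2 * T.card :=
    Finset.card_le_mul_card_image_of_maps_to hmaps 2 hfiber
  have hST : (S.card : ℝ) ≤ 2 * (T.card : ℝ) := by exact_mod_cast hcard
  have hC : (0:ℝ) < (Fintype.card (Fin n → Bool) : ℝ) := by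
    simp [Fintype.card_pos]
  have h1 : ((S.card : ℝ)) / (Fintype.card (Fin n → Bool) : ℝ)
      ≤ 2 * ((T.card : ℝ) / (Fintype.card (Fin n → Bool) : ℝ)) := by
    rw [← mul_div_assoc]
    exact (div_le_div_iff_of_pos_right hC).mpr hST
  have hprobT : prob (fun x : Fin n → Bool => (Bp B H).eval x = true)
      = Exp (fun x : Fin n → Bool => bval ((Bp B H).eval x)) := (Exp_bval _).symm
  have hTp : prob (fun x : Fin n → Bool => (Bp B H).eval x = true)
      = (T.card : ℝ) / (Fintype.card (Fin n → Bool) : ℝ) := by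
    unfold prob
    congr 2
    rw [hT]
    convert rfl
  calc prob Q = (S.card : ℝ) / (Fintype.card (Fin n → Bool) : ℝ) := rfl
    _ ≤ 2 * ((T.card : ℝ) / (Fintype.card (Fin n → Bool) : ℝ)) := h1
    _ = 2 * prob (fun x : Fin n → Bool => (Bp B H).eval x = true) := by rw [hTp]
    _ = 2 * Exp (fun x : Fin n → Bool => bval ((Bp B H).eval x)) := by rw [hprobT]
    _ < 2 * ε := by linarith

end Main
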